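/- In a random order value with p supported on linear extensions, for a feasible set T and the elementary game u_T, the value ψ_i(u_T) equals the probability under p that i is the last element of T to appear in π, and this probability is zero unless i ∈ max_⪯(T); moreover ∑_{i ∈ max_⪯(T)} ψ_i(u_T) = 1. -/
import Mathlib


open Finset
open scoped Classical BigOperators

def IsLinExt {n : ℕ} (le : Fin n → Fin n → Prop) (π : Equiv.Perm (Fin n)) : Prop :=
  ∀ i j : Fin n, le i j → i ≠ j → ((π.symm i : ℕ) < (π.symm j : ℕ))

def prefixSet {n : ℕ} (π : Equiv.Perm (Fin n)) (t : ℕ) : Finset (Fin n) :=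
  Finset.univ.filter fun i => (π.symm i : ℕ) < t

noncomputable def maxSet {n : ℕ} (le : Fin n → Fin n → Prop) (S : Finset (Fin n)) :
    Finset (Fin n) :=
  S.filter fun i => ∀ j ∈ S, le i j → i = j

noncomputable def pasvW {n : ℕ} (le : Fin n → Fin n → Prop) (lam : Fin n → ℝ)
    (π : Equiv.Perm (Fin n)) : ℝ :=
  ∏ t : Fin n,
    lam (π t) * (maxSet le (prefixSet π (t.1 + 1))).card /
      ∑ k ∈ maxSet le (prefixSet π (t.1 + 1)), lam k

noncomputable def pasvDist {n : ℕ} (le : Fin n → Fin n → Prop) (lam : Fin n → ℝ)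
    (π : Equiv.Perm (Fin n)) : ℝ :=
  if IsLinExt le π then
    pasvW le lam π / ∑ σ ∈ Finset.univ.filter (fun σ => IsLinExt le σ), pasvW le lam σ
  else 0

def before {n : ℕ} (π : Equiv.Perm (Fin n)) (i : Fin n) : Finset (Fin n) :=
  Finset.univ.filter fun j => (π.symm j : ℕ) < (π.symm i : ℕ)

noncomputable def rov {n : ℕ} (p : Equiv.Perm (Fin n) → ℝ) (U : Finset (Fin n) → ℝ)
    (i : Fin n) : ℝ :=
  ∑ π : Equiv.Perm (Fin n), p π * (U (insert i (before π i)) - U (before π i))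

theorem stmt10 {n : ℕ} (le : Fin n → Fin n → Prop) (hle : IsPartialOrder (Fin n) le)
    (p : Equiv.Perm (Fin n) → ℝ) (hp0 : ∀ π, 0 ≤ p π)
    (hp1 : ∑ π : Equiv.Perm (Fin n), p π = 1)
    (hsupp : ∀ π, p π ≠ 0 → IsLinExt le π)
    (T : Finset (Fin n)) (hTne : T.Nonempty)
    (hT : ∀ i ∈ T, ∀ j, le j i → j ∈ T) :
    (∀ i : Fin n,
        rov p (fun S => if T ⊆ S then (1 : ℝ) else 0) i =
          ∑ π ∈ Finset.univ.filter
              (fun π : Equiv.Perm (Fin n) =>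
                i ∈ T ∧ ∀ j ∈ T, (π.symm j : ℕ) ≤ (π.symm i : ℕ)), p π) ∧
    (∀ i : Fin n, i ∉ maxSet le T →
        rov p (fun S => if T ⊆ S then (1 : ℝ) else 0) i = 0) ∧
    ∑ i ∈ maxSet le T, rov p (fun S => if T ⊆ S then (1 : ℝ) else 0) i = 1 := by

  classical
  have key : ∀ (i : Fin n) (π : Equiv.Perm (Fin n)),
      ((if T ⊆ insert i (before π i) then (1:ℝ) else 0) -
        (if T ⊆ before π i then (1:ℝ) else 0)) =
      (if (i ∈ T ∧ ∀ j ∈ T, (π.symm j : ℕ) ≤ (π.symm i : ℕ)) then (1:ℝ) else 0) := by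
    intro i π
    have hinb : i ∉ before π i := by simp [before]
    by_cases hc : i ∈ T ∧ ∀ j ∈ T, (π.symm j : ℕ) ≤ (π.symm i : ℕ)
    · obtain ⟨hiT, hmax⟩ := hc
      have h1 : T ⊆ insert i (before π i) := by
        intro j hj
        rcases eq_or_ne j i with rfl | hne
        · exact mem_insert_self _ _
        · refine mem_insert_of_mem ?_
          simp only [before, mem_filter, mem_univ, true_and]
          have h := hmax j hj
          have hne' : (π.symm j : ℕ) ≠ (π.symm i : ℕ) := fun h' =>
            hne (π.symm.injective (Fin.val_injective h'))
          omega
      have h2 : ¬ T ⊆ before π i := fun h => hinb (h hiT)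
      rw [if_pos h1, if_neg h2, if_pos ⟨hiT, hmax⟩]; ring
    · push_neg at hc
      by_cases hiT : i ∈ T
      · obtain ⟨j, hjT, hj⟩ := hc hiT
        have hji : j ≠ i := by
          intro h; subst h; omega
        have h1 : ¬ T ⊆ insert i (before π i) := by
          intro h
          rcases mem_insert.1 (h hjT) with h' | h'
          · exact hji h'
          · simp only [before, mem_filter, mem_univ, true_and] at h'; omega
        have h2 : ¬ T ⊆ before π i := by
          intro h
          have := h hjT
          simp only [before, mem_filter, mem_univ, true_and] at this; omega
        have hc' : ¬ (i ∈ T ∧ ∀ j ∈ T, (π.symm j : ℕ) ≤ (π.symm i : ℕ)) := by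
          rintro ⟨-, hall⟩; have := hall j hjT; omega
        rw [if_neg h1, if_neg h2, if_neg hc']; ring
      · have hc' : ¬ (i ∈ T ∧ ∀ j ∈ T, (π.symm j : ℕ) ≤ (π.symm i : ℕ)) := fun h => hiT h.1
        simp only [Finset.subset_insert_iff_of_notMem hiT]
        rw [if_neg hc', sub_self]
  have claim1 : ∀ i : Fin n,
      rov p (fun S => if T ⊆ S then (1 : ℝ) else 0) i =
        ∑ π ∈ Finset.univ.filter
            (fun π : Equiv.Perm (Fin n) =>
              i ∈ T ∧ ∀ j ∈ T, (π.symm j : ℕ) ≤ (π.symm i : ℕ)), p π := by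
    intro i
    rw [rov, Finset.sum_filter]
    refine Finset.sum_congr rfl fun π _ => ?_
    simp only [key i π, mul_ite, mul_one, mul_zero]
  refine ⟨claim1, ?_, ?_⟩
  · intro i hi
    rw [claim1]
    refine Finset.sum_eq_zero fun π hπ => ?_
    simp only [mem_filter, mem_univ, true_and] at hπ
    obtain ⟨hiT, hmax⟩ := hπ
    by_contra hp
    have hlin := hsupp π hp
    simp only [maxSet, mem_filter, hiT, true_and] at hi
    push_neg at hi
    obtain ⟨j, hjT, hle', hne⟩ := hi
    have := hlin i j hle' hne
    have := hmax j hjT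
    omega
  · have : ∀ i ∈ maxSet le T,
        rov p (fun S => if T ⊆ S then (1 : ℝ) else 0) i =
          ∑ π : Equiv.Perm (Fin n),
            (if (i ∈ T ∧ ∀ j ∈ T, (π.symm j : ℕ) ≤ (π.symm i : ℕ)) then p π else 0) := by
      intro i _
      rw [claim1, Finset.sum_filter]
    rw [Finset.sum_congr rfl this, Finset.sum_comm, ← hp1]
    refine Finset.sum_congr rfl fun π _ => ?_
    by_cases hp : p π = 0
    · simp [hp]
    · have hlin := hsupp π hp
      obtain ⟨i₀, hi₀T, hi₀max⟩ := Finset.exists_max_image T (fun j => (π.symm j : ℕ)) hTne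
      have hi₀mem : i₀ ∈ maxSet le T := by
        simp only [maxSet, mem_filter, hi₀T, true_and]
        intro j hjT hle'
        by_contra hne
        have := hlin i₀ j hle' hne
        have := hi₀max j hjT
        omega
      have heach : ∀ i ∈ maxSet le T,
          (if (i ∈ T ∧ ∀ j ∈ T, (π.symm j : ℕ) ≤ (π.symm i : ℕ)) then p π else 0) =
            (if i = i₀ then p π else 0) := by
        intro i _
        by_cases hc : i ∈ T ∧ ∀ j ∈ T, (π.symm j : ℕ) ≤ (π.symm i : ℕ)
        · obtain ⟨hiT, hmax⟩ := hc
          have h1 := hmax i₀ hi₀T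
          have h2 := hi₀max i hiT
          have : i = i₀ := π.symm.injective (Fin.val_injective (by omega))
          rw [if_pos ⟨hiT, hmax⟩, if_pos this]
        · have : i ≠ i₀ := by rintro rfl; exact hc ⟨hi₀T, hi₀max⟩
          rw [if_neg hc, if_neg this]
      rw [Finset.sum_congr rfl heach, Finset.sum_ite_eq' (maxSet le T) i₀ (fun _ => p π),
        if_pos hi₀mem]
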